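/- Stationarity of shifted samples: if X₁, X₂, … is generated by a stationary ergodic process and s ≥ 1 is fixed, then the process X_s, X_{s+1}, … has the same distribution, and consequently for each cylinder B, ν((X_s,…,X_{s+k}),B) → ρ_X(B) almost surely as k → ∞, uniformly over finitely many values of s in the sense that for any J cylinders and any ε > 0 there is a.s. a K such that for all k > K and all s ≤ γk the deviation is at most ε. -/

import Mathlib

open MeasureTheory Filter Topology

section Birkhoff

variable {α : Type*} [MeasurableSpace α] {μ : Measure α} [IsProbabilityMeasure μ]
  {T : α → α} {g : α → ℝ}

/-- Birkhoff sum. -/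
noncomputable def birkS (T : α → α) (g : α → ℝ) (n : ℕ) (x : α) : ℝ :=
  ∑ i ∈ Finset.range n, g (T^[i] x)

/-- Running maximum of Birkhoff sums `S 1, …, S (N+1)`. -/
noncomputable def birkM (T : α → α) (g : α → ℝ) : ℕ → α → ℝ
  | 0 => birkS T g 1
  | (N+1) => fun x => max (birkM T g N x) (birkS T g (N+2) x)

lemma birkS_succ (x : α) (n : ℕ) :
    birkS T g (n+1) x = g x + birkS T g n (T x) := by
  simp only [birkS, Finset.sum_range_succ']
  simp [Function.iterate_succ_apply, add_comm]

lemma birkS_measurable (hT : Measurable T) (hg : Measurable g) (n : ℕ) :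
    Measurable (birkS T g n) := by
  apply Finset.measurable_sum
  intro i _
  exact hg.comp (hT.iterate i)

lemma birkS_integrable (hT : MeasurePreserving T μ μ) (hgm : Measurable g)
    (hg : Integrable g μ) (n : ℕ) : Integrable (birkS T g n) μ := by
  apply integrable_finset_sum
  intro i _
  exact ((hT.iterate i).integrable_comp hgm.aestronglyMeasurable).mpr hg

lemma birkM_measurable (hT : Measurable T) (hg : Measurable g) (N : ℕ) :
    Measurable (birkM T g N) := by
  induction N with
  | zero => exact birkS_measurable hT hg 1
  | succ N ih => exact ih.max (birkS_measurable hT hg (N+2))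

lemma birkM_integrable (hT : MeasurePreserving T μ μ) (hgm : Measurable g)
    (hg : Integrable g μ) (N : ℕ) :
    Integrable (birkM T g N) μ := by
  induction N with
  | zero => exact birkS_integrable hT hgm hg 1
  | succ N ih =>
    have := ih.sup (birkS_integrable hT hgm hg (N+2))
    exact this

lemma birkS_le_birkM (x : α) {n N : ℕ} (h : n ≤ N) :
    birkS T g (n+1) x ≤ birkM T g N x := by
  induction N with
  | zero => simp_all [birkM]
  | succ N ih =>
    rcases Nat.lt_or_ge n (N+1) with h' | h'
    · exact le_trans (ih (Nat.lt_succ_iff.mp h')) (le_max_left _ _)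
    · have : n = N+1 := le_antisymm h h'
      subst this
      exact le_max_right _ _

lemma birkM_le_of {x : α} {N : ℕ} {a : ℝ}
    (h : ∀ n ≤ N, birkS T g (n+1) x ≤ a) : birkM T g N x ≤ a := by
  induction N with
  | zero => exact h 0 le_rfl
  | succ N ih =>
    refine max_le (ih fun n hn => h n (hn.trans (Nat.le_succ N))) (h (N+1) le_rfl)

lemma exists_birkS_eq (x : α) (N : ℕ) : ∃ n ≤ N, birkM T g N x ≤ birkS T g (n+1) x := by
  induction N with
  | zero => exact ⟨0, le_rfl, le_rfl⟩
  | succ N ih =>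
    obtain ⟨n, hn, hle⟩ := ih
    rcases le_or_gt (birkS T g (N+2) x) (birkM T g N x) with h | h
    · exact ⟨n, hn.trans (Nat.le_succ N), max_le hle (h.trans hle)⟩
    · exact ⟨N+1, le_rfl, max_le h.le le_rfl⟩

lemma birkM_key (x : α) (N : ℕ) :
    birkM T g N x ≤ g x + max (birkM T g N (T x)) 0 := by
  apply birkM_le_of
  intro n hn
  rw [birkS_succ]
  gcongr
  cases n with
  | zero => simp [birkS]
  | succ m =>
    exact le_max_of_le_left (birkS_le_birkM (T x) (Nat.le_of_succ_le hn))

/-- Maximal ergodic theorem (Garsia's proof). -/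
theorem maximal_ergodic (hT : MeasurePreserving T μ μ) (hgm : Measurable g)
    (hg : Integrable g μ) :
    0 ≤ ∫ x in {x | ∃ n, 0 < birkS T g (n+1) x}, g x ∂μ := by
  set E : ℕ → Set α := fun N => {x | 0 < birkM T g N x} with hE
  have hEm : ∀ N, MeasurableSet (E N) :=
    fun N => measurableSet_lt measurable_const (birkM_measurable hT.measurable hgm N)
  have hEmono : Monotone E := by
    apply monotone_nat_of_le_succ
    intro N x hx
    exact lt_of_lt_of_le hx (le_max_left (birkM T g N x) (birkS T g (N+2) x))
  have hEU : {x | ∃ n, 0 < birkS T g (n+1) x} = ⋃ N, E N := by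
    ext x
    simp only [Set.mem_setOf_eq, Set.mem_iUnion, hE]
    constructor
    · rintro ⟨n, hn⟩
      exact ⟨n, lt_of_lt_of_le hn (birkS_le_birkM x le_rfl)⟩
    · rintro ⟨N, hN⟩
      obtain ⟨n, _, hle⟩ := exists_birkS_eq (T := T) (g := g) x N
      exact ⟨n, lt_of_lt_of_le hN hle⟩
  -- step: for each N, 0 ≤ ∫ x in E N, g x
  have hstep : ∀ N, 0 ≤ ∫ x in E N, g x ∂μ := by
    intro N
    set P : α → ℝ := fun x => max (birkM T g N x) 0 with hP
    have hPm : Measurable P := (birkM_measurable hT.measurable hgm N).max measurable_const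
    have hPi : Integrable P μ := by
      have := (birkM_integrable hT hgm hg N).sup (integrable_const (0:ℝ))
      exact this
    have hPTi : Integrable (fun x => P (T x)) μ :=
      (hT.integrable_comp hPm.aestronglyMeasurable).mpr hPi
    have h1 : ∀ x ∈ E N, P x - P (T x) ≤ g x := by
      intro x hx
      have hMx : P x = birkM T g N x := max_eq_left (le_of_lt hx)
      have := birkM_key (T := T) (g := g) x N
      rw [hMx]
      linarith [this]
    have h2 : ∀ x ∉ E N, P x - P (T x) ≤ 0 := by
      intro x hx
      have : birkM T g N x ≤ 0 := not_lt.mp hx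
      have hPx : P x = 0 := max_eq_right this
      have : 0 ≤ P (T x) := le_max_right _ _
      linarith
    have hint : ∫ x, (P x - P (T x)) ∂μ = 0 := by
      rw [integral_sub hPi hPTi]
      have : ∫ x, P (T x) ∂μ = ∫ x, P x ∂μ := by
        conv_rhs => rw [← hT.map_eq]
        rw [integral_map hT.measurable.aemeasurable hPm.aestronglyMeasurable]
      rw [this, sub_self]
    have hsplit : ∫ x, (P x - P (T x)) ∂μ
        = (∫ x in E N, (P x - P (T x)) ∂μ) + ∫ x in (E N)ᶜ, (P x - P (T x)) ∂μ :=
      (integral_add_compl (hEm N) (hPi.sub hPTi)).symm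
    have hcompl : ∫ x in (E N)ᶜ, (P x - P (T x)) ∂μ ≤ 0 := by
      apply setIntegral_nonpos (hEm N).compl
      intro x hx
      exact h2 x hx
    have hEint : 0 ≤ ∫ x in E N, (P x - P (T x)) ∂μ := by
      have := hsplit ▸ hint
      linarith
    calc (0:ℝ) ≤ ∫ x in E N, (P x - P (T x)) ∂μ := hEint
      _ ≤ ∫ x in E N, g x ∂μ := by
          apply setIntegral_mono_on ((hPi.sub hPTi).integrableOn)
            hg.integrableOn (hEm N) h1
  rw [hEU]
  have htend := tendsto_setIntegral_of_monotone hEm hEmono hg.integrableOn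
  exact ge_of_tendsto' htend hstep

lemma birkS_sub_const (c : ℝ) (n : ℕ) (x : α) :
    birkS T (fun y => g y - c) n x = birkS T g n x - n * c := by
  simp [birkS, Finset.sum_sub_distrib, mul_comm]

lemma birkS_neg (n : ℕ) (x : α) :
    birkS T (fun y => -g y) n x = - birkS T g n x := by
  simp [birkS]

/-- One-sided bound from the maximal ergodic theorem, in the ergodic case. -/
lemma one_sided (hμ : Ergodic T μ) (hgm : Measurable g) (hg : Integrable g μ)
    {ε : ℝ} (hε : 0 < ε) :
    ∀ᵐ x ∂μ, ∃ M : ℝ, ∀ n : ℕ, birkS T g n x ≤ n * (∫ y, g y ∂μ + ε) + M := by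
  set c : ℝ := ∫ y, g y ∂μ with hc
  set g' : α → ℝ := fun y => g y - (c + ε) with hg'
  have hg'm : Measurable g' := hgm.sub measurable_const
  have hg'i : Integrable g' μ := hg.sub (integrable_const _)
  set A : Set α := {x | ∀ M : ℕ, ∃ n, (M : ℝ) < birkS T g' n x} with hA
  have hAm : MeasurableSet A := by
    have : A = ⋂ M : ℕ, ⋃ n : ℕ, {x | (M : ℝ) < birkS T g' n x} := by
      ext x; simp [hA]
    rw [this]
    exact MeasurableSet.iInter fun M => MeasurableSet.iUnion fun n =>
      measurableSet_lt measurable_const (birkS_measurable hμ.toMeasurePreserving.measurable hg'm n)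
  have hinv : T ⁻¹' A = A := by
    ext x
    simp only [Set.mem_preimage, hA, Set.mem_setOf_eq]
    constructor
    · -- T x ∈ A → x ∈ A
      intro h M
      obtain ⟨M', hM'⟩ := exists_nat_ge ((M : ℝ) - g' x)
      obtain ⟨n, hn⟩ := h M'
      refine ⟨n + 1, ?_⟩
      rw [birkS_succ]
      have : (M : ℝ) - g' x ≤ M' := hM'
      linarith
    · -- x ∈ A → T x ∈ A
      intro h M
      obtain ⟨M', hM'⟩ := exists_nat_ge ((M : ℝ) + g' x)
      obtain ⟨n, hn⟩ := h M'
      have hM'0 : (0 : ℝ) ≤ M' := Nat.cast_nonneg _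
      match n with
      | 0 => simp [birkS] at hn; linarith
      | (m+1) =>
        refine ⟨m, ?_⟩
        rw [birkS_succ] at hn
        linarith
  rcases hμ.ae_empty_or_univ hAm hinv with h0 | h1
  · -- μ A = 0 : good case
    have hA0 : μ A = 0 := ae_eq_empty.mp h0
    filter_upwards [measure_eq_zero_iff_ae_notMem.mp hA0] with x hx
    simp only [hA, Set.mem_setOf_eq, not_forall, not_exists, not_lt] at hx
    obtain ⟨M, hM⟩ := hx
    refine ⟨M, fun n => ?_⟩
    have := hM n
    rw [birkS_sub_const (c + ε)] at this
    linarith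
  · -- μ A = 1 : contradiction with maximal ergodic theorem
    exfalso
    have hAc0 : μ Aᶜ = 0 := ae_eq_univ.mp h1
    set E : Set α := {x | ∃ n, 0 < birkS T g' (n+1) x} with hEdef
    have hEm : MeasurableSet E := by
      have : E = ⋃ n : ℕ, {x | 0 < birkS T g' (n+1) x} := by ext x; simp [hEdef]
      rw [this]
      exact MeasurableSet.iUnion fun n => measurableSet_lt measurable_const
        (birkS_measurable hμ.toMeasurePreserving.measurable hg'm (n+1))
    have hAE : A ⊆ E := by
      intro x hx
      obtain ⟨n, hn⟩ := hx 0
      match n with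
      | 0 => simp [birkS] at hn
      | (m+1) => exact ⟨m, by exact_mod_cast hn⟩
    have hEc0 : μ Eᶜ = 0 := measure_mono_null (Set.compl_subset_compl.mpr hAE) hAc0
    have hmax := maximal_ergodic hμ.toMeasurePreserving hg'm hg'i
    have hint : ∫ x in E, g' x ∂μ = ∫ x, g' x ∂μ := by
      have := integral_add_compl hEm hg'i (f := g')
      have hz : ∫ x in Eᶜ, g' x ∂μ = 0 := by
        rw [Measure.restrict_eq_zero.mpr hEc0, integral_zero_measure]
      linarith [this, hz]
    have hgint : ∫ x, g' x ∂μ = -ε := by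
      rw [hg', integral_sub hg (integrable_const _), integral_const]
      simp [measure_univ, hc]
    rw [hEdef] at hint
    rw [hint, hgint] at hmax
    linarith

/-- Pointwise (Birkhoff) ergodic theorem, ergodic case. -/
theorem birkhoff_ergodic (hμ : Ergodic T μ) (hgm : Measurable g) (hg : Integrable g μ) :
    ∀ᵐ x ∂μ, Tendsto (fun n : ℕ => birkS T g n x / n) atTop (𝓝 (∫ y, g y ∂μ)) := by
  set c : ℝ := ∫ y, g y ∂μ with hc
  have hup : ∀ᵐ x ∂μ, ∀ m : ℕ, ∃ M : ℝ, ∀ n : ℕ,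
      birkS T g n x ≤ n * (c + 1/(m+1)) + M := by
    rw [ae_all_iff]
    intro m
    exact one_sided hμ hgm hg (by positivity)
  have hdown : ∀ᵐ x ∂μ, ∀ m : ℕ, ∃ M : ℝ, ∀ n : ℕ,
      -(birkS T g n x) ≤ n * (-c + 1/(m+1)) + M := by
    rw [ae_all_iff]
    intro m
    have := one_sided hμ hgm.neg hg.neg (ε := 1/(m+1)) (by positivity)
    have hneg : ∫ y, -g y ∂μ = -c := by rw [integral_neg]
    filter_upwards [this] with x hx
    obtain ⟨M, hM⟩ := hx
    refine ⟨M, fun n => ?_⟩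
    have := hM n
    change birkS T (fun y => -g y) n x ≤ ↑n * (∫ y, -g y ∂μ + 1 / (↑m + 1)) + M at this
    rw [birkS_neg, hneg] at this
    exact this
  filter_upwards [hup, hdown] with x hu hd
  rw [Metric.tendsto_atTop]
  intro ε hε
  obtain ⟨m, hm⟩ := exists_nat_one_div_lt (show (0:ℝ) < ε/2 by linarith)
  obtain ⟨Mu, hMu⟩ := hu m
  obtain ⟨Ml, hMl⟩ := hd m
  set M0 : ℝ := max |Mu| |Ml| with hM0
  have hM0nn : 0 ≤ M0 := le_trans (abs_nonneg _) (le_max_left _ _)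
  obtain ⟨N, hN⟩ := exists_nat_ge (2 * M0 / ε + 1)
  refine ⟨N, fun n hn => ?_⟩
  have hn1 : 1 ≤ n := by
    have h0 : (0:ℝ) ≤ 2 * M0 / ε := by positivity
    have : (1:ℝ) ≤ N := le_trans (by linarith) hN
    exact_mod_cast le_trans (by exact_mod_cast this) (Nat.cast_le.mpr hn)
  have hnpos : (0:ℝ) < n := by exact_mod_cast hn1
  have hnN : 2 * M0 / ε ≤ (n:ℝ) := by
    have : (N:ℝ) ≤ n := Nat.cast_le.mpr hn
    linarith
  have hM0n : M0 / n ≤ ε / 2 := by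
    rw [div_le_iff₀ hnpos]
    rcases le_or_gt (2 * M0 / ε) n with h | h
    · have := (div_le_iff₀ hε).mp ((div_le_div_iff_of_pos_right hε).mpr (le_refl (2*M0)))
      nlinarith [hnN, hε]
    · linarith
  have hδ : 1/((m:ℝ)+1) < ε/2 := hm
  rw [Real.dist_eq]
  rw [abs_sub_lt_iff]
  have h1 := hMu n
  have h2 := hMl n
  have hMuM : Mu ≤ M0 := le_trans (le_abs_self _) (le_max_left _ _)
  have hMlM : Ml ≤ M0 := le_trans (le_abs_self _) (le_max_right _ _)
  have hMn : M0 ≤ (ε/2) * n := by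
    rw [div_le_iff₀ hnpos] at hM0n; linarith
  have hd1 : (1/((m:ℝ)+1)) * n < (ε/2) * n := mul_lt_mul_of_pos_right hδ hnpos
  constructor
  · have h : (birkS T g n x / n - c) * n < ε * n := by
      have e : (birkS T g n x / n - c) * n = birkS T g n x - c * n := by
        field_simp
        try ring
      rw [e]
      nlinarith [h1, hMuM, hMn, hd1]
    exact lt_of_mul_lt_mul_right h hnpos.le
  · have h : (c - birkS T g n x / n) * n < ε * n := by
      have e : (c - birkS T g n x / n) * n = c * n - birkS T g n x := by
        field_simp
        try ring
      rw [e]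
      nlinarith [h2, hMlM, hMn, hd1]
    exact lt_of_mul_lt_mul_right h hnpos.le

end Birkhoff

/-- Deterministic uniform window-average lemma. -/
lemma window_lemma {b : ℕ → ℝ} (hb : ∀ i, |b i| ≤ 1)
    (h : Tendsto (fun n : ℕ => (∑ i ∈ Finset.range n, b i) / n) atTop (𝓝 0))
    {ε c : ℝ} (hε : 0 < ε) (hc : 0 < c) :
    ∃ K : ℕ, ∀ u v : ℕ, K < v → c * v ≤ (v : ℝ) - u →
      |∑ i ∈ Finset.Ico u v, b i| ≤ ε * ((v : ℝ) - u) := by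
  set B : ℕ → ℝ := fun n => ∑ i ∈ Finset.range n, b i with hB
  have hεc : 0 < ε * c / 4 := by positivity
  rw [Metric.tendsto_atTop] at h
  obtain ⟨N0, hN0⟩ := h (ε * c / 4) hεc
  set N : ℕ := max N0 1 with hN
  have hNbound : ∀ n : ℕ, N ≤ n → |B n| ≤ (ε * c / 4) * n := by
    intro n hn
    have hn0 : (0:ℝ) < n := by
      have : 1 ≤ n := le_trans (le_max_right _ _) hn
      exact_mod_cast this
    have := hN0 n (le_trans (le_max_left _ _) hn)
    rw [Real.dist_eq, sub_zero, abs_div, abs_of_pos hn0, div_lt_iff₀ hn0] at this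
    linarith [this]
  obtain ⟨K1, hK1⟩ := exists_nat_ge (4 * N / (ε * c))
  refine ⟨max N K1, fun u v hv hcv => ?_⟩
  have hvN : N ≤ v := le_of_lt (lt_of_le_of_lt (le_max_left _ _) hv)
  have hvK1 : (K1 : ℝ) < v := by exact_mod_cast lt_of_le_of_lt (le_max_right _ _) hv
  have hv0 : (0:ℝ) < v := by
    have : 1 ≤ v := le_trans (le_max_right N0 1) hvN
    exact_mod_cast this
  have huv : (u:ℝ) < v := by nlinarith [hcv, mul_pos hc hv0]
  have huvn : u ≤ v := by exact_mod_cast le_of_lt (by exact_mod_cast huv : (u:ℝ) < (v:ℝ))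
  have hBv : |B v| ≤ (ε * c / 4) * v := hNbound v hvN
  have hBu : |B u| ≤ (ε * c / 4) * v := by
    rcases le_or_gt N u with h' | h'
    · calc |B u| ≤ (ε * c / 4) * u := hNbound u h'
        _ ≤ (ε * c / 4) * v := by
            apply mul_le_mul_of_nonneg_left (le_of_lt huv) (le_of_lt hεc)
    · have h1 : |B u| ≤ (u:ℝ) := by
        calc |B u| ≤ ∑ i ∈ Finset.range u, |b i| := Finset.abs_sum_le_sum_abs _ _
          _ ≤ ∑ _i ∈ Finset.range u, (1:ℝ) := Finset.sum_le_sum fun i _ => hb i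
          _ = u := by simp
      have h2 : (u:ℝ) ≤ N := by exact_mod_cast le_of_lt h'
      have h3 : (N:ℝ) ≤ (ε * c / 4) * v := by
        have h4 : 4 * (N:ℝ) / (ε * c) ≤ K1 := hK1
        have h5 : 0 < ε * c := by positivity
        rw [div_le_iff₀ h5] at h4
        nlinarith [hvK1, h5]
      linarith
  have hsum : ∑ i ∈ Finset.Ico u v, b i = B v - B u :=
    Finset.sum_Ico_eq_sub _ huvn
  rw [hsum]
  have habs : |B v - B u| ≤ (ε * c / 2) * v := by
    calc |B v - B u| ≤ |B v| + |B u| := abs_sub _ _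
      _ ≤ (ε * c / 2) * v := by linarith
  calc |B v - B u| ≤ (ε * c / 2) * v := habs
    _ ≤ ε * ((v:ℝ) - u) := by nlinarith [hcv, hε]

/-- Empirical sliding-window frequency of the (cylinder) set `S` of dimension `l`
in the sample given by the first `n` values of `X`. -/
noncomputable def nu (n : ℕ) (X : ℕ → ℝ) (l : ℕ) (S : Set (ℕ → ℝ)) : ℝ :=
  if l ≤ n ∧ 1 ≤ l then
    (∑ i ∈ Finset.range (n - l + 1),
      S.indicator (fun _ => (1 : ℝ)) (fun j => X (i + j))) / (n - l + 1)
  else 0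

/-- A finite-dimensional cylinder with rational endpoints. -/
structure Cylinder where
  dim : ℕ
  dimPos : 0 < dim
  a : Fin dim → ℚ
  b : Fin dim → ℚ

/-- The subset of `ℕ → ℝ` determined by a cylinder (it constrains the first `dim`
coordinates to lie in the corresponding rational-endpoint intervals). -/
def Cylinder.set (C : Cylinder) : Set (ℕ → ℝ) :=
  {x | ∀ j : Fin C.dim, (C.a j : ℝ) ≤ x j.val ∧ x j.val ≤ (C.b j : ℝ)}

/-- Distributional distance between two process measures. -/
noncomputable def dd (w : ℕ → ℝ) (B : ℕ → Cylinder) (μ ν : Measure (ℕ → ℝ)) : ℝ :=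
  ∑' i, w i * |(μ (B i).set).toReal - (ν (B i).set).toReal|

/-- Empirical distributional distance between two finite samples. -/
noncomputable def dhat (w : ℕ → ℝ) (B : ℕ → Cylinder)
    (n : ℕ) (X : ℕ → ℝ) (m : ℕ) (Y : ℕ → ℝ) : ℝ :=
  ∑' i, w i * |nu n X (B i).dim (B i).set - nu m Y (B i).dim (B i).set|

/-- One-sample empirical distributional distance to a known process measure. -/
noncomputable def dhat1 (w : ℕ → ℝ) (B : ℕ → Cylinder)
    (n : ℕ) (X : ℕ → ℝ) (ρ : Measure (ℕ → ℝ)) : ℝ :=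
  ∑' i, w i * |nu n X (B i).dim (B i).set - (ρ (B i).set).toReal|

/-- The left shift on `ℕ → ℝ`. -/
def shift : (ℕ → ℝ) → (ℕ → ℝ) := fun x n => x (n + 1)

/-- Concatenation of a word of length `k` with another word. -/
def conc (k : ℕ) (x y : ℕ → ℝ) : ℕ → ℝ := fun i => if i < k then x i else y (i - k)

lemma shift_iterate (s : ℕ) (x : ℕ → ℝ) (n : ℕ) : shift^[s] x n = x (n + s) := by
  induction s generalizing x n with
  | zero => simp
  | succ s ih =>
    rw [Function.iterate_succ_apply]
    rw [ih]
    simp [shift, Nat.add_assoc, Nat.add_comm 1 s]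

lemma cylinder_measurable (C : Cylinder) : MeasurableSet C.set := by
  have : C.set = ⋂ j : Fin C.dim,
      ((fun x : ℕ → ℝ => x j.val) ⁻¹' (Set.Icc (C.a j : ℝ) (C.b j : ℝ))) := by
    ext x
    simp [Cylinder.set, Set.mem_Icc]
  rw [this]
  exact MeasurableSet.iInter fun j =>
    (measurable_pi_apply j.val) measurableSet_Icc

/-- Stationarity of shifted samples: any fixed shift of a stationary ergodic
process has the same distribution, and the empirical frequencies of finitely
many cylinders computed on the shifted samples converge uniformly over
linearly-bounded starting points. -/
theorem stmt18 (μ : Measure (ℕ → ℝ)) [IsProbabilityMeasure μ]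
    (hμ : Ergodic shift μ) :
    (∀ s : ℕ, μ.map (fun x i => x (s + i)) = μ) ∧
    (∀ (J : ℕ) (C : Fin J → Cylinder) (γ : ℝ), γ ∈ Set.Ioo (0 : ℝ) 1 →
      ∀ ε : ℝ, 0 < ε →
      ∀ᵐ x ∂μ, ∃ K : ℕ, ∀ k : ℕ, K < k → ∀ s : ℕ, (s : ℝ) ≤ γ * k → ∀ j : Fin J,
        |nu (k - s) (fun i => x (s + i)) (C j).dim (C j).set
            - (μ (C j).set).toReal| ≤ ε) := by
  have hMP : MeasurePreserving shift μ μ := hμ.toMeasurePreserving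
  constructor
  · intro s
    have he : (fun x : ℕ → ℝ => fun i => x (s + i)) = shift^[s] := by
      funext x i
      rw [shift_iterate, Nat.add_comm]
    rw [he, (hMP.iterate s).map_eq]
  · intro J C γ hγ ε hε
    obtain ⟨hγ0, hγ1⟩ := hγ
    set f : Fin J → (ℕ → ℝ) → ℝ := fun j => (C j).set.indicator (fun _ => (1:ℝ)) with hf
    have hSm : ∀ j, MeasurableSet (C j).set := fun j => cylinder_measurable (C j)
    have hfm : ∀ j, Measurable (f j) := fun j => measurable_const.indicator (hSm j)
    have hfi : ∀ j, Integrable (f j) μ := fun j => (integrable_const (1:ℝ)).indicator (hSm j)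
    set cj : Fin J → ℝ := fun j => (μ (C j).set).toReal with hcj
    have hint : ∀ j, ∫ x, f j x ∂μ = cj j := by
      intro j
      rw [hf]
      simp only [integral_indicator_const (1:ℝ) (hSm j), smul_eq_mul, mul_one]
      rfl
    have hae : ∀ᵐ x ∂μ, ∀ j, Tendsto (fun n : ℕ => birkS shift (f j) n x / n)
        atTop (𝓝 (cj j)) := by
      rw [ae_all_iff]
      intro j
      have := birkhoff_ergodic hμ (hfm j) (hfi j)
      rwa [hint j] at this
    filter_upwards [hae] with x hx
    -- bounds on cj and f
    have hcj0 : ∀ j, 0 ≤ cj j := fun j => ENNReal.toReal_nonneg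
    have hcj1 : ∀ j, cj j ≤ 1 := by
      intro j
      rw [hcj]
      simpa using ENNReal.toReal_mono ENNReal.one_ne_top (prob_le_one (μ := μ) (s := (C j).set))
    have hf01 : ∀ j y, 0 ≤ f j y ∧ f j y ≤ 1 := by
      intro j y
      rw [hf]
      by_cases h : y ∈ (C j).set <;> simp [Set.indicator_apply, h]
    set c' : ℝ := (1 - γ)/4 with hc'
    have hc'pos : 0 < c' := by rw [hc']; linarith
    have hwin : ∀ j, ∃ K : ℕ, ∀ u v : ℕ, K < v → c' * v ≤ (v : ℝ) - u →
        |∑ i ∈ Finset.Ico u v, (f j (shift^[i] x) - cj j)| ≤ ε * ((v : ℝ) - u) := by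
      intro j
      apply window_lemma (b := fun i => f j (shift^[i] x) - cj j) ?_ ?_ hε hc'pos
      · intro i
        rw [abs_le]
        obtain ⟨h0, h1⟩ := hf01 j (shift^[i] x)
        constructor
        · show -1 ≤ f j (shift^[i] x) - cj j
          linarith [hcj1 j]
        · show f j (shift^[i] x) - cj j ≤ 1
          linarith [hcj0 j]
      · have h1 := (hx j).sub_const (cj j)
        rw [sub_self] at h1
        apply Tendsto.congr' _ h1
        filter_upwards [eventually_ge_atTop 1] with n hn
        have hn0 : (0:ℝ) < n := by exact_mod_cast hn
        have hn0' : (n:ℝ) ≠ 0 := ne_of_gt hn0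
        show birkS shift (f j) n x / n - cj j
            = (∑ i ∈ Finset.range n, (f j (shift^[i] x) - cj j)) / n
        rw [Finset.sum_sub_distrib, Finset.sum_const, Finset.card_range, nsmul_eq_mul,
          sub_div, mul_div_cancel_left₀ _ hn0']
        rfl
    choose K hK using hwin
    set L : ℕ := Finset.univ.sup (fun j => (C j).dim) with hL
    set K0 : ℕ := Finset.univ.sup K with hK0
    refine ⟨K0 + L + 1 + Nat.ceil ((2*(L:ℝ)+2)/(1-γ)), ?_⟩
    intro k hk s hs j
    set l : ℕ := (C j).dim with hl
    have hl1 : 1 ≤ l := (C j).dimPos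
    have hlL : l ≤ L := Finset.le_sup (f := fun j => (C j).dim) (Finset.mem_univ j)
    have hKj : K j ≤ K0 := Finset.le_sup (f := K) (Finset.mem_univ j)
    have hkK0L : K0 + L + 1 ≤ k := by omega
    have hkc : (Nat.ceil ((2*(L:ℝ)+2)/(1-γ)) : ℕ) ≤ k := by omega
    have hkceil : (2*(L:ℝ)+2)/(1-γ) ≤ (k:ℝ) :=
      le_trans (Nat.le_ceil _) (by exact_mod_cast hkc)
    have h1γ : (0:ℝ) < 1 - γ := by linarith
    have hF1 : 2*(L:ℝ)+2 ≤ (1-γ) * k := by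
      rw [div_le_iff₀ h1γ] at hkceil
      linarith [hkceil]
    have hk0 : 1 ≤ k := by omega
    have hkR : (1:ℝ) ≤ k := by exact_mod_cast hk0
    have hsk : (s:ℝ) < k := by nlinarith [hs, hγ1, hkR]
    have hskn : s < k := by exact_mod_cast hsk
    set n : ℕ := k - s with hn
    have hnR : (n:ℝ) = (k:ℝ) - s := by
      rw [hn]; exact_mod_cast Nat.cast_sub (le_of_lt hskn)
    have hlR : (l:ℝ) ≤ L := by exact_mod_cast hlL
    have hln : l ≤ n := by
      have h2 : (l:ℝ) ≤ n := by rw [hnR]; linarith [hF1, hs, hlR]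
      exact_mod_cast h2
    set w : ℕ := n - l + 1 with hw
    have hwR : (w:ℝ) = (n:ℝ) - l + 1 := by
      rw [hw]; push_cast [Nat.cast_sub hln]; ring
    set v : ℕ := s + w with hv
    have hvR : (v:ℝ) = (k:ℝ) - l + 1 := by
      rw [hv]; push_cast [Nat.cast_sub hln]; rw [hwR, hnR]; ring
    have hlnR : (l:ℝ) ≤ n := by exact_mod_cast hln
    have hw1 : (1:ℝ) ≤ w := by rw [hwR]; linarith
    have hKjv : K j < v := by
      have h2 : (K j : ℝ) < v := by
        rw [hvR]
        have h3 : (K j : ℝ) ≤ K0 := by exact_mod_cast hKj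
        have h4 : (K0:ℝ) + L + 1 ≤ k := by exact_mod_cast hkK0L
        linarith
      exact_mod_cast h2
    have hvsw : (v:ℝ) - s = w := by rw [hvR, hwR, hnR]; ring
    have hc'v : c' * v ≤ (v:ℝ) - s := by
      rw [hvsw, hwR, hnR, hc']
      have hv2k : (v:ℝ) ≤ 2*k := by rw [hvR]; linarith
      have h5 : (1-γ)/4 * v ≤ (1-γ)/4 * (2*k) :=
        mul_le_mul_of_nonneg_left hv2k (by linarith)
      calc (1-γ)/4 * v ≤ (1-γ)/4 * (2*k) := h5
        _ ≤ (k:ℝ) - s - l + 1 := by linarith [hF1, hs, hlR]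
    have happ := hK j s v hKjv hc'v
    rw [hvsw] at happ
    -- rewrite nu
    have hnum : ∀ i : ℕ,
        ((C j).set.indicator (fun _ => (1:ℝ)) fun j' => x (s + (i + j')))
          = f j (shift^[s+i] x) := by
      intro i
      rw [hf]
      congr 1
      funext j'
      rw [shift_iterate]
      congr 1
      ring
    have hsum : (∑ i ∈ Finset.range (n - l + 1),
          (C j).set.indicator (fun _ => (1:ℝ)) (fun j' => x (s + (i + j'))))
        = ∑ i ∈ Finset.Ico s v, f j (shift^[i] x) := by
      rw [Finset.sum_Ico_eq_sum_range]
      have h6 : v - s = n - l + 1 := by omega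
      rw [h6]
      exact Finset.sum_congr rfl fun i _ => hnum i
    have hcard : (∑ i ∈ Finset.Ico s v, (f j (shift^[i] x) - cj j))
        = (∑ i ∈ Finset.Ico s v, f j (shift^[i] x)) - (w:ℝ) * cj j := by
      rw [Finset.sum_sub_distrib]
      congr 1
      rw [Finset.sum_const, Nat.card_Ico, nsmul_eq_mul]
      congr 2
      omega
    rw [hcard] at happ
    have hwpos : (0:ℝ) < w := lt_of_lt_of_le one_pos hw1
    have hnueq : nu (k - s) (fun i => x (s + i)) (C j).dim (C j).set
        = (∑ i ∈ Finset.Ico s v, f j (shift^[i] x)) / w := by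
      rw [nu, if_pos ⟨hln, hl1⟩]
      rw [hsum]
      congr 1
      rw [hwR]
    rw [hnueq]
    set A : ℝ := ∑ i ∈ Finset.Ico s v, f j (shift^[i] x) with hA
    have heq : A / w - (μ (C j).set).toReal = (A - (w:ℝ) * cj j) / w := by
      rw [hcj]
      field_simp
    rw [heq, abs_div, abs_of_pos hwpos, div_le_iff₀ hwpos]
    exact happ
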